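/- With ρ and ρ̄ as above, two nonempty words u, v over {A,B} satisfy u = v if and only if ρ(u) + ρ̄(v) = 1. -/
import Mathlib


/-- The end-marked binary encoding of a word over a two-element alphabet. -/
noncomputable def rho (θ : Bool → ℝ) (w : List Bool) : ℝ :=
  (∑ i : Fin w.length, θ (w.get i) * (1 / 2 : ℝ) ^ (i.val + 1)) + (1 / 2 : ℝ) ^ (w.length + 1)

lemma rho_nil (θ : Bool → ℝ) : rho θ [] = 1 / 2 := by
  simp [rho]

lemma rho_cons (θ : Bool → ℝ) (x : Bool) (w : List Bool) :
    rho θ (x :: w) = θ x / 2 + rho θ w / 2 := by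
  simp only [rho, List.length_cons, Fin.sum_univ_succ, Fin.val_zero, Fin.val_succ,
    List.get_cons_succ, List.get_cons_zero]
  have hs : ∑ i : Fin w.length, θ ((x :: w).get i.succ) * (1 / 2 : ℝ) ^ (i.val + 1 + 1)
      = (∑ i : Fin w.length, θ (w.get i) * (1 / 2 : ℝ) ^ (i.val + 1)) / 2 := by
    rw [Finset.sum_div]
    refine Finset.sum_congr rfl fun i _ => ?_
    show θ (w.get i) * (1 / 2 : ℝ) ^ (i.val + 1 + 1)
      = θ (w.get i) * (1 / 2 : ℝ) ^ (i.val + 1) / 2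
    ring
  rw [hs]
  ring

lemma rho_pos (θ : Bool → ℝ) (hθ : ∀ x, 0 ≤ θ x) (w : List Bool) : 0 < rho θ w := by
  induction w with
  | nil => rw [rho_nil]; norm_num
  | cons x w ih =>
    rw [rho_cons]
    have := hθ x
    linarith

lemma rho_lt_one (θ : Bool → ℝ) (hθ : ∀ x, θ x ≤ 1) (w : List Bool) : rho θ w < 1 := by
  induction w with
  | nil => rw [rho_nil]; norm_num
  | cons x w ih =>
    rw [rho_cons]
    have := hθ x
    linarith

lemma rho_inj (θ : Bool → ℝ) (hθ : ∀ x, θ x = 0 ∨ θ x = 1) (hinj : θ true ≠ θ false)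
    (u v : List Bool) (h : rho θ u = rho θ v) : u = v := by
  have h0 : ∀ x, 0 ≤ θ x := fun x => by rcases hθ x with h | h <;> rw [h] <;> norm_num
  have h1 : ∀ x, θ x ≤ 1 := fun x => by rcases hθ x with h | h <;> rw [h] <;> norm_num
  induction u generalizing v with
  | nil =>
    cases v with
    | nil => rfl
    | cons y v =>
      exfalso
      rw [rho_nil, rho_cons] at h
      have hp := rho_pos θ h0 v
      have hl := rho_lt_one θ h1 v
      rcases hθ y with hy | hy <;> rw [hy] at h <;> linarith
  | cons x u ih =>
    cases v with
    | nil =>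
      exfalso
      rw [rho_nil, rho_cons] at h
      have hp := rho_pos θ h0 u
      have hl := rho_lt_one θ h1 u
      rcases hθ x with hx | hx <;> rw [hx] at h <;> linarith
    | cons y v =>
      rw [rho_cons, rho_cons] at h
      have hpu := rho_pos θ h0 u
      have hlu := rho_lt_one θ h1 u
      have hpv := rho_pos θ h0 v
      have hlv := rho_lt_one θ h1 v
      have hxy : θ x = θ y := by
        rcases hθ x with hx | hx <;> rcases hθ y with hy | hy <;>
          rw [hx, hy] at h ⊢ <;> linarith
      have : x = y := by
        cases x <;> cases y <;> first | rfl | (exfalso; exact hinj (by rw [hxy]) ) |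
          (exfalso; exact hinj (by rw [hxy]))
      subst this
      have : rho θ u = rho θ v := by linarith
      rw [ih v this]

lemma rho_add_rho (θ θbar : Bool → ℝ) (hsum : ∀ x, θ x + θbar x = 1) (w : List Bool) :
    rho θ w + rho θbar w = 1 := by
  induction w with
  | nil => rw [rho_nil, rho_nil]; norm_num
  | cons x w ih =>
    rw [rho_cons, rho_cons]
    have := hsum x
    linarith

theorem stmt_4 (θ θbar : Bool → ℝ)
    (hθ : ∀ x, θ x = 0 ∨ θ x = 1) (hθbar : ∀ x, θbar x = 0 ∨ θbar x = 1)
    (hsum : ∀ x, θ x + θbar x = 1) (hinj : θ true ≠ θ false)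
    (u v : List Bool) (hu : u ≠ []) (hv : v ≠ []) :
    u = v ↔ rho θ u + rho θbar v = 1 := by
  constructor
  · rintro rfl
    exact rho_add_rho θ θbar hsum u
  · intro h
    have hv1 : rho θ v + rho θbar v = 1 := rho_add_rho θ θbar hsum v
    exact rho_inj θ hθ hinj u v (by linarith)
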